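/- In the Standard Model finite spectral triple, let B ⊆ End(H) be the image of the representation of ℂ⊕M_3(ℂ)⊕M_4(ℂ)⊕M_4(ℂ) given by π(λ,m,a,b) := (λ⊕m)⊗e_{22}⊗1 + a⊗e_{11}⊗e_{11} + b⊗e_{11}⊗(1−e_{11}), where λ ∈ ℂ, m ∈ M_3(ℂ), a,b ∈ M_4(ℂ), and λ⊕m denotes the 4×4 block-diagonal matrix. Then B and B° commute, and in fact B' = B°. -/

import Mathlib

open scoped ComplexConjugate
open Matrix

/-- The Hilbert space `H = M₄(ℂ) ⊕ M₄(ℂ)` of the finite Standard Model spectral triple,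
with inner product `⟨(v,w),(v',w')⟩ = Tr(v*v') + Tr(w*w')`: it is realized as functions
on `Fin 2 × Fin 4 × Fin 4` (the first index `0`/`1` selecting `v`/`w`) with the standard
inner product. -/
abbrev HSM := EuclideanSpace ℂ (Fin 2 × Fin 4 × Fin 4)

/-- The operator `π(α ⊗ e_{s't'} ⊗ β)` on `HSM`, sending the component `t` to the
component `s` via `u ↦ α u βᵗ` (here `s, t ∈ {0,1}` correspond to the `M₂(ℂ)` matrix unit
`e_{s+1,t+1}`). -/
noncomputable def opE (s t : Fin 2) (α β : Matrix (Fin 4) (Fin 4) ℂ) :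
    HSM →ₗ[ℂ] HSM where
  toFun x := WithLp.toLp 2 (fun p : Fin 2 × Fin 4 × Fin 4 =>
    if p.1 = s then ∑ k, ∑ l, α p.2.1 k * β p.2.2 l * x (t, k, l) else 0)
  map_add' x y := by
    ext p
    by_cases h : p.1 = s <;> simp [h, Finset.sum_add_distrib, mul_add]
  map_smul' c x := by
    ext p
    by_cases h : p.1 = s <;> simp [h, Finset.mul_sum]
    ring_nf
    simp [mul_assoc, mul_comm, mul_left_comm]

/-- The real structure `J(v,w) := (w*, v*)` on `HSM`. -/
noncomputable def JSM : HSM ≃ₛₗ[starRingEnd ℂ] HSM where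
  toFun x := WithLp.toLp 2 (fun p : Fin 2 × Fin 4 × Fin 4 => (starRingEnd ℂ) (x (1 - p.1, p.2.2, p.2.1)))
  invFun x := WithLp.toLp 2 (fun p : Fin 2 × Fin 4 × Fin 4 => (starRingEnd ℂ) (x (1 - p.1, p.2.2, p.2.1)))
  left_inv x := by
    ext p
    obtain ⟨s, i, j⟩ := p
    fin_cases s <;> simp
  right_inv x := by
    ext p
    obtain ⟨s, i, j⟩ := p
    fin_cases s <;> simp
  map_add' x y := by ext p; simp
  map_smul' c x := by ext p; simp

/-- For an antilinear isometry `J` and `ξ ∈ End(H)`, the operator `ξ° := J ξ* J⁻¹`. -/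
noncomputable def sharp (J : HSM ≃ₛₗ[starRingEnd ℂ] HSM) (ξ : HSM →ₗ[ℂ] HSM) :
    HSM →ₗ[ℂ] HSM where
  toFun x := J (star ξ (J.symm x))
  map_add' x y := by simp
  map_smul' c x := by
    show J (star ξ (J.symm (c • x))) = _
    rw [map_smulₛₗ, _root_.map_smul, map_smulₛₗ]; simp

/-- Conjugation `ξ ↦ J ξ J⁻¹` of an operator by the antilinear map `J`. -/
noncomputable def conjJ (J : HSM ≃ₛₗ[starRingEnd ℂ] HSM) (ξ : HSM →ₗ[ℂ] HSM) :
    HSM →ₗ[ℂ] HSM where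
  toFun x := J (ξ (J.symm x))
  map_add' x y := by simp
  map_smul' c x := by
    show J (ξ (J.symm (c • x))) = _
    rw [map_smulₛₗ, _root_.map_smul, map_smulₛₗ]; simp

/-- The commutant of a subset of `End(H)`. -/
def commutant (S : Set (HSM →ₗ[ℂ] HSM)) : Set (HSM →ₗ[ℂ] HSM) :=
  {η | ∀ ξ ∈ S, η * ξ = ξ * η}

/-- `B° := {J ξ* J⁻¹ : ξ ∈ B}`. -/
noncomputable def opp (S : Set (HSM →ₗ[ℂ] HSM)) : Set (HSM →ₗ[ℂ] HSM) :=
  sharp JSM '' S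

/-- `Ω¹_D(A)`: the complex span of `{a[D,b] : a, b ∈ A}`. -/
noncomputable def omega1 (Aset : Set (HSM →ₗ[ℂ] HSM)) (D : HSM →ₗ[ℂ] HSM) :
    Submodule ℂ (HSM →ₗ[ℂ] HSM) :=
  Submodule.span ℂ {x | ∃ a ∈ Aset, ∃ b ∈ Aset, x = a * (D * b - b * D)}

/-- `Cl_D(A)`: the complex `*`-subalgebra of `End(H)` generated by `A` and `Ω¹_D(A)`. -/
noncomputable def cliff (Aset : Set (HSM →ₗ[ℂ] HSM)) (D : HSM →ₗ[ℂ] HSM) :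
    StarSubalgebra ℂ (HSM →ₗ[ℂ] HSM) :=
  StarAlgebra.adjoin ℂ (Aset ∪ (omega1 Aset D : Set (HSM →ₗ[ℂ] HSM)))

/-- The matrix unit `e₁₁ ∈ M₄(ℂ)`. -/
noncomputable def E11 : Matrix (Fin 4) (Fin 4) ℂ :=
  !![1, 0, 0, 0; 0, 0, 0, 0; 0, 0, 0, 0; 0, 0, 0, 0]

/-- The matrix `diag(λ, λ̄) ⊕ q ∈ M₄(ℂ)`, where `q = [[a,b],[-b̄,ā]] ∈ ℍ ⊆ M₂(ℂ)`. -/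
noncomputable def Mlq (l a b : ℂ) : Matrix (Fin 4) (Fin 4) ℂ :=
  !![l, 0, 0, 0;
     0, conj l, 0, 0;
     0, 0, a, b;
     0, 0, -(conj b), conj a]

/-- The matrix `λ ⊕ m ∈ M₄(ℂ)` with `m ∈ M₃(ℂ)`. -/
noncomputable def Mlm (l : ℂ) (m : Matrix (Fin 3) (Fin 3) ℂ) : Matrix (Fin 4) (Fin 4) ℂ :=
  !![l, 0, 0, 0;
     0, m 0 0, m 0 1, m 0 2;
     0, m 1 0, m 1 1, m 1 2;
     0, m 2 0, m 2 1, m 2 2]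

/-- The Standard Model algebra `A ≅ ℂ ⊕ ℍ ⊕ M₃(ℂ)`, acting on `HSM` as
`(diag(λ,λ̄) ⊕ q) ⊗ e₁₁ ⊗ 1 + (λ ⊕ m) ⊗ e₂₂ ⊗ 1`. -/
noncomputable def ASM : Set (HSM →ₗ[ℂ] HSM) :=
  {ξ | ∃ (l a b : ℂ) (m : Matrix (Fin 3) (Fin 3) ℂ),
    ξ = opE 0 0 (Mlq l a b) 1 + opE 1 1 (Mlm l m) 1}

/-- The selfadjoint matrix `A_α ∈ M₄(ℂ)` with upper-right `2×2` block
`α = [[α₁₃,α₁₄],[α₂₃,α₂₄]]`, lower-left block `α*` and zero diagonal blocks. -/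
noncomputable def Moff (x13 x14 x23 x24 : ℂ) : Matrix (Fin 4) (Fin 4) ℂ :=
  !![0, 0, x13, x14;
     0, 0, x23, x24;
     conj x13, conj x23, 0, 0;
     conj x14, conj x24, 0, 0]

/-- The matrix `Δ ∈ M₄(ℂ)` with first row `(0,δ₁₂,δ₁₃,δ₁₄)`, second row
`(δ₂₁,δ₂₂,δ₂₃,δ₂₄)` and zero third and fourth rows. -/
noncomputable def Mdelta (d12 d13 d14 d21 d22 d23 d24 : ℂ) : Matrix (Fin 4) (Fin 4) ℂ :=
  !![0, d12, d13, d14;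
     d21, d22, d23, d24;
     0, 0, 0, 0;
     0, 0, 0, 0]

/-- The component `D₀ = A_α ⊗ e₁₁ ⊗ e₁₁ + A_β ⊗ e₁₁ ⊗ (1 − e₁₁) + Δ ⊗ e₁₂ ⊗ e₁₁
+ Δ* ⊗ e₂₁ ⊗ e₁₁` of the Dirac operator. -/
noncomputable def D0SM (a13 a14 a23 a24 b13 b14 b23 b24 d12 d13 d14 d21 d22 d23 d24 : ℂ) :
    HSM →ₗ[ℂ] HSM :=
  opE 0 0 (Moff a13 a14 a23 a24) E11
    + opE 0 0 (Moff b13 b14 b23 b24) (1 - E11)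
    + opE 0 1 (Mdelta d12 d13 d14 d21 d22 d23 d24) E11
    + opE 1 0 (Mdelta d12 d13 d14 d21 d22 d23 d24)ᴴ E11

/-- The component `D_R = e₁₁ ⊗ (Υ_R e₂₁ + Ῡ_R e₁₂) ⊗ e₁₁` of the Dirac operator. -/
noncomputable def DRSM (yR : ℂ) : HSM →ₗ[ℂ] HSM :=
  yR • opE 1 0 E11 E11 + (conj yR) • opE 0 1 E11 E11

/-- The full Dirac operator `D = D₀ + D₁ + D_R` with `D₁ = J D₀ J⁻¹`. -/
noncomputable def DSM
    (a13 a14 a23 a24 b13 b14 b23 b24 d12 d13 d14 d21 d22 d23 d24 yR : ℂ) :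
    HSM →ₗ[ℂ] HSM :=
  D0SM a13 a14 a23 a24 b13 b14 b23 b24 d12 d13 d14 d21 d22 d23 d24
    + conjJ JSM (D0SM a13 a14 a23 a24 b13 b14 b23 b24 d12 d13 d14 d21 d22 d23 d24)
    + DRSM yR

/-- The algebra `B = ℂ ⊕ M₃(ℂ) ⊕ M₄(ℂ) ⊕ M₄(ℂ)`, represented on `HSM` by
`π(λ,m,a,b) = (λ⊕m)⊗e₂₂⊗1 + a⊗e₁₁⊗e₁₁ + b⊗e₁₁⊗(1−e₁₁)`. -/
noncomputable def BSM : Set (HSM →ₗ[ℂ] HSM) :=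
  {ξ | ∃ (l : ℂ) (m : Matrix (Fin 3) (Fin 3) ℂ) (a b : Matrix (Fin 4) (Fin 4) ℂ),
    ξ = opE 1 1 (Mlm l m) 1 + opE 0 0 a E11 + opE 0 0 b (1 - E11)}

lemma opE_apply (s t : Fin 2) (α β : Matrix (Fin 4) (Fin 4) ℂ) (x : HSM) (p) :
    opE s t α β x p = if p.1 = s then ∑ k, ∑ l, α p.2.1 k * β p.2.2 l * x (t, k, l) else 0 := rfl

lemma opE_zero (s t : Fin 2) (β : Matrix (Fin 4) (Fin 4) ℂ) : opE s t 0 β = 0 := by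
  ext x p; simp [opE_apply]

lemma opE_mul (s t s' t' : Fin 2) (α β α' β' : Matrix (Fin 4) (Fin 4) ℂ) :
    opE s t α β * opE s' t' α' β' = if t = s' then opE s t' (α * α') (β * β') else 0 := by
  ext x p
  by_cases h1 : p.1 = s
  · by_cases h2 : t = s'
    · simp only [h2, if_pos, Module.End.mul_apply, opE_apply, h1, if_true, Matrix.mul_apply]
      simp only [Fin.sum_univ_four]
      ring
    · simp [Module.End.mul_apply, opE_apply, h1, h2]
  · by_cases h2 : t = s' <;> simp [Module.End.mul_apply, opE_apply, h1, h2]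

lemma opE_add_right (s t : Fin 2) (α β β' : Matrix (Fin 4) (Fin 4) ℂ) :
    opE s t α (β + β') = opE s t α β + opE s t α β' := by
  ext x p
  by_cases h1 : p.1 = s <;>
    simp [opE_apply, h1, Matrix.add_apply, mul_add, add_mul, Finset.sum_add_distrib]

private lemma sum4_comm (F : Fin 4 → Fin 4 → Fin 4 → Fin 4 → ℂ) :
    ∑ i, ∑ j, ∑ k, ∑ l, F i j k l = ∑ k, ∑ l, ∑ i, ∑ j, F i j k l := by
  calc ∑ i, ∑ j, ∑ k, ∑ l, F i j k l
      = ∑ i, ∑ k, ∑ j, ∑ l, F i j k l :=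
        Finset.sum_congr rfl fun i _ => Finset.sum_comm
    _ = ∑ k, ∑ i, ∑ j, ∑ l, F i j k l := Finset.sum_comm
    _ = ∑ k, ∑ i, ∑ l, ∑ j, F i j k l :=
        Finset.sum_congr rfl fun k _ => Finset.sum_congr rfl fun i _ => Finset.sum_comm
    _ = ∑ k, ∑ l, ∑ i, ∑ j, F i j k l :=
        Finset.sum_congr rfl fun k _ => Finset.sum_comm

set_option maxHeartbeats 1000000 in
lemma star_opE (s t : Fin 2) (α β : Matrix (Fin 4) (Fin 4) ℂ) :
    star (opE s t α β) = opE t s αᴴ βᴴ := by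
  have helper : ∀ (u w : Fin 2) (x y : HSM),
      (∑ i, ∑ j, (starRingEnd ℂ)
          (∑ k, ∑ l, star (α k i) * star (β l j) * x (u, k, l)) * y (w, i, j))
      = ∑ k, ∑ l, (starRingEnd ℂ) (x (u, k, l)) *
          ∑ i, ∑ j, α k i * β l j * y (w, i, j) := by
    intro u w x y
    simp only [map_sum, _root_.map_mul, Complex.conj_conj, RCLike.star_def, Finset.sum_mul,
      Finset.mul_sum]
    rw [sum4_comm]
    refine Finset.sum_congr rfl fun k _ => Finset.sum_congr rfl fun l _ =>
      Finset.sum_congr rfl fun i _ => Finset.sum_congr rfl fun j _ => by ring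
  rw [LinearMap.star_eq_adjoint]
  symm
  rw [LinearMap.eq_adjoint_iff]
  intro x y
  simp only [PiLp.inner_apply, RCLike.inner_apply, opE_apply, Fintype.sum_prod_type,
    Matrix.conjTranspose_apply, Fin.sum_univ_two, Fin.isValue, mul_ite, ite_mul,
    zero_mul, mul_zero, Finset.sum_const_zero, map_zero]
  fin_cases s <;> fin_cases t <;>
    simp only [Fin.isValue, if_true, if_false, ite_self, Finset.sum_const_zero, zero_add,
      add_zero, Fin.zero_eta, Fin.mk_one, one_ne_zero, zero_ne_one, reduceCtorEq,
      if_neg, not_false_iff, map_zero, zero_mul] <;>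
    (simp only [mul_zero, zero_mul, Finset.sum_const_zero, zero_add, add_zero, mul_comm (WithLp.ofLp y _),
       mul_comm _ ((starRingEnd ℂ) (WithLp.ofLp x _))]
     exact helper _ _ x y)

lemma JSM_apply (x : HSM) (p : Fin 2 × Fin 4 × Fin 4) :
    JSM x p = (starRingEnd ℂ) (x (1 - p.1, p.2.2, p.2.1)) := rfl

lemma JSM_symm_apply (x : HSM) (p : Fin 2 × Fin 4 × Fin 4) :
    JSM.symm x p = (starRingEnd ℂ) (x (1 - p.1, p.2.2, p.2.1)) := rfl

lemma sharp_apply (ξ : HSM →ₗ[ℂ] HSM) (x : HSM) :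
    sharp JSM ξ x = JSM (star ξ (JSM.symm x)) := rfl

private lemma fin2_sub (u t : Fin 2) : (u = 1 - t) ↔ (1 - u = t) := by
  fin_cases u <;> fin_cases t <;> simp

lemma sharp_opE (s t : Fin 2) (α β : Matrix (Fin 4) (Fin 4) ℂ) :
    sharp JSM (opE s t α β) = opE (1 - t) (1 - s) βᵀ αᵀ := by
  ext x p
  rw [sharp_apply, star_opE, JSM_apply]
  simp only [opE_apply, JSM_symm_apply, Matrix.conjTranspose_apply, Matrix.transpose_apply]
  by_cases h : 1 - p.1 = t
  · rw [if_pos h, if_pos ((fin2_sub p.1 t).mpr h)]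
    simp only [map_sum, _root_.map_mul, Complex.conj_conj, RCLike.star_def]
    rw [Finset.sum_comm]
    refine Finset.sum_congr rfl fun k _ => Finset.sum_congr rfl fun l _ => by ring
  · rw [if_neg h, if_neg (fun hh => h ((fin2_sub p.1 t).mp hh)), map_zero]

lemma sharp_add (ξ ζ : HSM →ₗ[ℂ] HSM) :
    sharp JSM (ξ + ζ) = sharp JSM ξ + sharp JSM ζ := by
  ext x p
  simp [sharp_apply, star_add]

lemma Mlm_comm_E11 (l : ℂ) (m : Matrix (Fin 3) (Fin 3) ℂ) :
    Mlm l m * E11 = E11 * Mlm l m := by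
  ext i j
  fin_cases i <;> fin_cases j <;>
    simp [Mlm, E11, Matrix.mul_apply, Fin.sum_univ_four, Matrix.vecHead, Matrix.vecTail]

lemma Mlm_comm_E11' (l : ℂ) (m : Matrix (Fin 3) (Fin 3) ℂ) :
    Mlm l m * (1 - E11) = (1 - E11) * Mlm l m := by
  rw [Matrix.mul_sub, Matrix.sub_mul, Matrix.mul_one, Matrix.one_mul, Mlm_comm_E11]

lemma Mlm_transpose (l : ℂ) (m : Matrix (Fin 3) (Fin 3) ℂ) :
    (Mlm l m)ᵀ = Mlm l mᵀ := by
  ext i j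
  fin_cases i <;> fin_cases j <;> simp [Mlm, Matrix.vecHead, Matrix.vecTail]

lemma E11_transpose : E11ᵀ = E11 := by
  ext i j; fin_cases i <;> fin_cases j <;> simp [E11, Matrix.vecHead, Matrix.vecTail]

noncomputable def Bop (l : ℂ) (m : Matrix (Fin 3) (Fin 3) ℂ) (a b : Matrix (Fin 4) (Fin 4) ℂ) :
    HSM →ₗ[ℂ] HSM :=
  opE 1 1 (Mlm l m) 1 + opE 0 0 a E11 + opE 0 0 b (1 - E11)

noncomputable def Bop' (l : ℂ) (m : Matrix (Fin 3) (Fin 3) ℂ) (a b : Matrix (Fin 4) (Fin 4) ℂ) :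
    HSM →ₗ[ℂ] HSM :=
  opE 0 0 1 (Mlm l m) + opE 1 1 E11 a + opE 1 1 (1 - E11) b

lemma Bop_mem (l m a b) : Bop l m a b ∈ BSM := ⟨l, m, a, b, rfl⟩

lemma sharp_Bop (l : ℂ) (m : Matrix (Fin 3) (Fin 3) ℂ) (a b : Matrix (Fin 4) (Fin 4) ℂ) :
    sharp JSM (Bop l m a b) = Bop' l mᵀ aᵀ bᵀ := by
  rw [Bop, sharp_add, sharp_add, sharp_opE, sharp_opE, sharp_opE]
  have h0 : (1 - 1 : Fin 2) = 0 := rfl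
  have h1 : (1 - 0 : Fin 2) = 1 := rfl
  rw [h0, h1, Matrix.transpose_one, Mlm_transpose, E11_transpose]
  have : (1 - E11)ᵀ = 1 - E11 := by
    rw [Matrix.transpose_sub, Matrix.transpose_one, E11_transpose]
  rw [this, Bop']

lemma Bop_comm_Bop' (l m a b l' m' a' b') :
    Bop l m a b * Bop' l' m' a' b' = Bop' l' m' a' b' * Bop l m a b := by
  simp only [Bop, Bop', add_mul, mul_add, opE_mul]
  norm_num
  rw [Mlm_comm_E11 l m, Mlm_comm_E11' l m, ← Mlm_comm_E11 l' m', ← Mlm_comm_E11' l' m']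
  abel

noncomputable def δv (q : Fin 2 × Fin 4 × Fin 4) : HSM := EuclideanSpace.single q 1

lemma δv_apply (q p : Fin 2 × Fin 4 × Fin 4) : δv q p = if p = q then 1 else 0 :=
  EuclideanSpace.single_apply q 1 p

example (f : (Fin 2 × Fin 4 × Fin 4) → HSM) (p) : (∑ i, f i) p = ∑ i, f i p :=
  by rw [WithLp.ofLp_sum, Finset.sum_apply]

lemma hsm_decomp (x : HSM) : x = ∑ q, x q • δv q := by
  ext p
  rw [WithLp.ofLp_sum, Finset.sum_apply]
  simp [δv_apply]

lemma ext_delta (η ζ : HSM →ₗ[ℂ] HSM) (h : ∀ q, η (δv q) = ζ (δv q)) : η = ζ := by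
  refine LinearMap.ext fun x => ?_
  rw [hsm_decomp x, map_sum, map_sum]
  exact Finset.sum_congr rfl fun q _ => by
    rw [_root_.map_smul, _root_.map_smul, h q]

lemma eta_apply (η : HSM →ₗ[ℂ] HSM) (x : HSM) (p) :
    η x p = ∑ q, x q * η (δv q) p := by
  conv_lhs => rw [hsm_decomp x, map_sum]
  rw [WithLp.ofLp_sum, Finset.sum_apply]
  exact Finset.sum_congr rfl fun q _ => by rw [_root_.map_smul]; rfl

lemma opE_delta (s t : Fin 2) (α β : Matrix (Fin 4) (Fin 4) ℂ) (q p) :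
    opE s t α β (δv q) p =
      if p.1 = s ∧ q.1 = t then α p.2.1 q.2.1 * β p.2.2 q.2.2 else 0 := by
  rw [opE_apply]
  by_cases h : p.1 = s
  · simp only [h, if_true, δv_apply, true_and]
    by_cases h2 : q.1 = t
    · rw [if_pos h2]
      have hcond : ∀ k l : Fin 4, (((t : Fin 2), k, l) = q) ↔ (k = q.2.1 ∧ l = q.2.2) := by
        intro k l
        constructor
        · rintro rfl; exact ⟨rfl, rfl⟩
        · rintro ⟨hk, hl⟩
          subst hk; subst hl
          rw [show t = q.1 from h2.symm]
      simp only [hcond]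
      simp [ite_and, Finset.sum_ite_eq, Finset.sum_ite_eq']
    · rw [if_neg h2]
      refine Finset.sum_eq_zero fun k _ => Finset.sum_eq_zero fun l _ => ?_
      rw [if_neg (by rintro rfl; exact h2 rfl), mul_zero]
  · simp [h]

lemma comm_entry (η : HSM →ₗ[ℂ] HSM) (s t : Fin 2) (α β : Matrix (Fin 4) (Fin 4) ℂ)
    (h : η * opE s t α β = opE s t α β * η) (p q : Fin 2 × Fin 4 × Fin 4) :
    (if q.1 = t then ∑ k, ∑ l, α k q.2.1 * β l q.2.2 * η (δv (s, k, l)) p else 0)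
      = (if p.1 = s then ∑ k, ∑ l, α p.2.1 k * β p.2.2 l * η (δv q) (t, k, l) else 0) := by
  have hh := congrArg (fun (z : HSM) => z p) (LinearMap.congr_fun h (δv q))
  simp only [Module.End.mul_apply] at hh
  have hL : η (opE s t α β (δv q)) p
      = if q.1 = t then ∑ k, ∑ l, α k q.2.1 * β l q.2.2 * η (δv (s, k, l)) p else 0 := by
    rw [eta_apply]
    simp only [Fintype.sum_prod_type, opE_delta]
    by_cases hq : q.1 = t
    · simp only [hq, and_true, ite_mul, zero_mul, Finset.sum_ite_irrel,
        Finset.sum_const_zero, Finset.sum_ite_eq', Finset.mem_univ, if_true]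
    · simp [hq]
  have hR : opE s t α β (η (δv q)) p
      = if p.1 = s then ∑ k, ∑ l, α p.2.1 k * β p.2.2 l * η (δv q) (t, k, l) else 0 :=
    opE_apply s t α β _ p
  rw [← hL, ← hR]
  exact hh

def E4 (r c : Fin 4) : Matrix (Fin 4) (Fin 4) ℂ :=
  fun i j => if i = r then if j = c then 1 else 0 else 0

lemma E11_apply (i j : Fin 4) : E11 i j = if i = 0 then if j = 0 then 1 else 0 else 0 := by
  fin_cases i <;> fin_cases j <;> simp [E11, Matrix.vecHead, Matrix.vecTail]

lemma one_sub_E11_apply (i j : Fin 4) :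
    (1 - E11) i j = if i = j then (if i = 0 then 0 else 1) else 0 := by
  rw [Matrix.sub_apply, Matrix.one_apply, E11_apply]
  fin_cases i <;> fin_cases j <;> simp

lemma Mlm_zero : Mlm 0 0 = 0 := by
  ext i j; fin_cases i <;> fin_cases j <;> simp [Mlm, Matrix.vecHead, Matrix.vecTail]

lemma memA (a : Matrix (Fin 4) (Fin 4) ℂ) : opE 0 0 a E11 ∈ BSM :=
  ⟨0, 0, a, 0, by rw [Mlm_zero, opE_zero, opE_zero, zero_add, add_zero]⟩

lemma memB (b : Matrix (Fin 4) (Fin 4) ℂ) : opE 0 0 b (1 - E11) ∈ BSM :=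
  ⟨0, 0, 0, b, by rw [Mlm_zero, opE_zero, opE_zero, zero_add, zero_add]⟩

lemma memM (l : ℂ) (m : Matrix (Fin 3) (Fin 3) ℂ) : opE 1 1 (Mlm l m) 1 ∈ BSM :=
  ⟨l, m, 0, 0, by rw [opE_zero, opE_zero, add_zero, add_zero]⟩


lemma memP0 : opE 0 0 1 1 ∈ BSM := by
  refine ⟨0, 0, 1, 1, ?_⟩
  rw [Mlm_zero, opE_zero, zero_add, ← opE_add_right]
  congr 1
  rw [add_sub_cancel]

lemma Mlm_one_zero : Mlm 1 0 = E4 0 0 := by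
  ext i j
  fin_cases i <;> fin_cases j <;> simp [Mlm, E4, Matrix.vecHead, Matrix.vecTail]

lemma memME4 (r c : Fin 4) (hrc : r = 0 ↔ c = 0) : opE 1 1 (E4 r c) 1 ∈ BSM := by
  by_cases hr : r = 0
  · have hc := hrc.mp hr
    subst hr; subst hc
    rw [← Mlm_one_zero]
    exact memM 1 0
  · have hc : ¬ c = 0 := fun h => hr (hrc.mpr h)
    have key : Mlm 0 (fun i j => if i.succ = r then if j.succ = c then 1 else 0 else 0)
        = E4 r c := by
      ext i j
      fin_cases i <;> fin_cases j <;>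
        simp [Mlm, E4, Matrix.vecHead, Matrix.vecTail, Ne.symm hr, Ne.symm hc] <;>
        rfl
    rw [← key]
    exact memM 0 _

lemma Bop'_delta (l : ℂ) (m : Matrix (Fin 3) (Fin 3) ℂ) (a b : Matrix (Fin 4) (Fin 4) ℂ)
    (q p : Fin 2 × Fin 4 × Fin 4) :
    Bop' l m a b (δv q) p =
      (if p.1 = 0 ∧ q.1 = 0 then (1 : Matrix (Fin 4) (Fin 4) ℂ) p.2.1 q.2.1 * Mlm l m p.2.2 q.2.2 else 0)
      + (if p.1 = 1 ∧ q.1 = 1 then E11 p.2.1 q.2.1 * a p.2.2 q.2.2 else 0)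
      + (if p.1 = 1 ∧ q.1 = 1 then (1 - E11) p.2.1 q.2.1 * b p.2.2 q.2.2 else 0) := by
  simp only [Bop', LinearMap.add_apply, PiLp.add_apply, opE_delta]

lemma Mlm_succ (x : ℂ) (m : Matrix (Fin 3) (Fin 3) ℂ) (j l : Fin 3) :
    Mlm x m j.succ l.succ = m j l := by
  fin_cases j <;> fin_cases l <;>
    simp [Mlm, Matrix.vecHead, Matrix.vecTail]

lemma Mlm_row0 (x : ℂ) (m : Matrix (Fin 3) (Fin 3) ℂ) (l : Fin 4) (hl : l ≠ 0) :
    Mlm x m 0 l = 0 := by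
  fin_cases l <;> simp_all [Mlm, Matrix.vecHead, Matrix.vecTail]

lemma Mlm_col0 (x : ℂ) (m : Matrix (Fin 3) (Fin 3) ℂ) (j : Fin 4) (hj : j ≠ 0) :
    Mlm x m j 0 = 0 := by
  fin_cases j <;> simp_all [Mlm, Matrix.vecHead, Matrix.vecTail]

lemma Mlm_00 (x : ℂ) (m : Matrix (Fin 3) (Fin 3) ℂ) : Mlm x m 0 0 = x := by
  simp [Mlm, Matrix.vecHead, Matrix.vecTail]

lemma commutant_sub (η : HSM →ₗ[ℂ] HSM) (hη : η ∈ commutant BSM) : η ∈ opp BSM := by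
  have hA : ∀ (r c i j k l : Fin 4) (u w : Fin 2),
      (if w = 0 then if l = 0 then if k = c then η (δv (0, r, 0)) (u, i, j) else 0 else 0 else 0)
        = if u = 0 then if j = 0 then if i = r then η (δv (w, k, l)) (0, c, 0) else 0 else 0 else 0 := by
    intro r c i j k l u w
    have h := comm_entry η 0 0 (E4 r c) E11 (hη _ (memA (E4 r c))) (u, i, j) (w, k, l)
    simpa only [E4, E11_apply, ite_mul, zero_mul, one_mul, mul_ite, mul_zero, mul_one,
      Finset.sum_ite_irrel, Finset.sum_const_zero, Finset.sum_ite_eq, Finset.sum_ite_eq',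
      Finset.mem_univ, if_true] using h
  have hB : ∀ (r c i j k l : Fin 4) (u w : Fin 2),
      (if w = 0 then if l = 0 then 0 else if k = c then η (δv (0, r, l)) (u, i, j) else 0 else 0)
        = if u = 0 then if j = 0 then 0 else if i = r then η (δv (w, k, l)) (0, c, j) else 0 else 0 := by
    intro r c i j k l u w
    have h := comm_entry η 0 0 (E4 r c) (1 - E11) (hη _ (memB (E4 r c))) (u, i, j) (w, k, l)
    simpa only [E4, one_sub_E11_apply, ite_mul, zero_mul, one_mul, mul_ite, mul_zero, mul_one,
      Finset.sum_ite_irrel, Finset.sum_const_zero, Finset.sum_ite_eq, Finset.sum_ite_eq',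
      Finset.mem_univ, if_true] using h
  have hC : ∀ (r c : Fin 4), (r = 0 ↔ c = 0) → ∀ (i j k l : Fin 4) (u w : Fin 2),
      (if w = 1 then if k = c then η (δv (1, r, l)) (u, i, j) else 0 else 0)
        = if u = 1 then if i = r then η (δv (w, k, l)) (1, c, j) else 0 else 0 := by
    intro r c hrc i j k l u w
    have h := comm_entry η 1 1 (E4 r c) 1 (hη _ (memME4 r c hrc)) (u, i, j) (w, k, l)
    simpa only [E4, Matrix.one_apply, ite_mul, zero_mul, one_mul, mul_ite, mul_zero, mul_one,
      Finset.sum_ite_irrel, Finset.sum_const_zero, Finset.sum_ite_eq, Finset.sum_ite_eq',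
      Finset.mem_univ, if_true] using h
  have h0 : ∀ (i j k l : Fin 4) (u w : Fin 2),
      (if w = 0 then η (δv (0, k, l)) (u, i, j) else 0)
        = if u = 0 then η (δv (w, k, l)) (0, i, j) else 0 := by
    intro i j k l u w
    have h := comm_entry η 0 0 1 1 (hη _ memP0) (u, i, j) (w, k, l)
    simpa only [Matrix.one_apply, ite_mul, zero_mul, one_mul, mul_ite, mul_zero, mul_one,
      Finset.sum_ite_irrel, Finset.sum_const_zero, Finset.sum_ite_eq, Finset.sum_ite_eq',
      Finset.mem_univ, if_true] using h
  have hcross0 : ∀ (i j k l : Fin 4), η (δv (0, k, l)) (1, i, j) = 0 := by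
    intro i j k l
    simpa using h0 i j k l 1 0
  have hcross1 : ∀ (i j k l : Fin 4), η (δv (1, k, l)) (0, i, j) = 0 := by
    intro i j k l
    simpa using (h0 i j k l 0 1).symm
  set lC : ℂ := η (δv (0, 0, 0)) (0, 0, 0) with hlC
  set mC : Matrix (Fin 3) (Fin 3) ℂ :=
    fun r c => η (δv (0, 0, c.succ)) (0, 0, r.succ) with hmC
  set aC : Matrix (Fin 4) (Fin 4) ℂ := fun j l => η (δv (1, 0, l)) (1, 0, j) with haC
  set bC : Matrix (Fin 4) (Fin 4) ℂ := fun j l => η (δv (1, 1, l)) (1, 1, j) with hbC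
  refine ⟨Bop lC mCᵀ aCᵀ bCᵀ, Bop_mem _ _ _ _, ?_⟩
  rw [sharp_Bop, Matrix.transpose_transpose, Matrix.transpose_transpose,
    Matrix.transpose_transpose]
  refine ext_delta _ _ fun q => ?_
  ext p
  obtain ⟨w, k, l⟩ := q
  obtain ⟨u, i, j⟩ := p
  rw [Bop'_delta]
  fin_cases u <;> fin_cases w
  · -- block (0,0)
    simp only [Fin.isValue, Fin.zero_eta, and_self, if_true, one_ne_zero, and_false,
      if_false, add_zero, Matrix.one_apply, zero_ne_one, false_and]
    by_cases hik : i = k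
    · subst hik
      rw [if_pos rfl, one_mul]
      by_cases hj : j = 0 <;> by_cases hl : l = 0
      · subst hj; subst hl
        rw [Mlm_00]
        simpa using (hA i 0 i 0 0 0 0 0).symm
      · subst hj
        rw [Mlm_row0 _ _ _ hl]
        have h := hA i i i 0 i l 0 0
        rw [if_neg hl] at h
        simpa using h
      · subst hl
        rw [Mlm_col0 _ _ _ hj]
        have h := hB i i i j i 0 0 0
        rw [if_neg hj] at h
        simpa using h
      · have h := hB i 0 i j 0 l 0 0
        rw [if_neg hl, if_neg hj] at h
        simp only [Fin.isValue, if_pos rfl] at h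
        rw [show η (δv (0, i, l)) (0, i, j) = η (δv (0, 0, l)) (0, 0, j) by simpa using h]
        fin_cases j <;> fin_cases l <;>
          first
          | exact absurd rfl hj
          | exact absurd rfl hl
          | exact Mlm_succ lC mC 0 0
          | exact Mlm_succ lC mC 0 1
          | exact Mlm_succ lC mC 0 2
          | exact Mlm_succ lC mC 1 0
          | exact Mlm_succ lC mC 1 1
          | exact Mlm_succ lC mC 1 2
          | exact Mlm_succ lC mC 2 0
          | exact Mlm_succ lC mC 2 1
          | exact Mlm_succ lC mC 2 2
    · rw [if_neg hik, zero_mul]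
      by_cases hj : j = 0
      · subst hj
        by_cases hl : l = 0
        · subst hl
          have h := hA i i i 0 k 0 0 0
          rw [if_neg (show ¬ (k = i) from fun hh => hik hh.symm)] at h
          simpa using h
        · have h := hA i i i 0 k l 0 0
          rw [if_neg hl] at h
          simpa using h
      · have h := hB i i i j k l 0 0
        rw [if_neg hj] at h
        by_cases hl : l = 0
        · rw [if_pos hl] at h
          simpa using h
        · rw [if_neg hl, if_neg (show ¬ (k = i) from fun hh => hik hh.symm)] at h
          simpa using h
  · -- block (0,1)
    simp only [Fin.isValue, Fin.zero_eta, Fin.mk_one, zero_ne_one, one_ne_zero, and_false,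
      false_and, and_self, if_false, add_zero, zero_add]
    exact (hcross1 i j k l).symm
  · -- block (1,0)
    simp only [Fin.isValue, Fin.zero_eta, Fin.mk_one, zero_ne_one, one_ne_zero, and_false,
      false_and, and_self, if_false, add_zero, zero_add]
    exact (hcross0 i j k l).symm
  · -- block (1,1)
    simp only [Fin.isValue, Fin.mk_one, and_self, if_true, one_ne_zero, zero_ne_one,
      and_false, false_and, if_false, zero_add, E11_apply, one_sub_E11_apply]
    fin_cases i <;> fin_cases k <;> simp [haC, hbC]
    · simpa using hC 0 0 Iff.rfl 0 j 1 l 1 1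
    · simpa using hC 0 0 Iff.rfl 0 j 2 l 1 1
    · simpa using hC 0 0 Iff.rfl 0 j 3 l 1 1
    · simpa using (hC 0 0 Iff.rfl 1 j 0 l 1 1).symm
    · simpa using hC 1 1 Iff.rfl 1 j 2 l 1 1
    · simpa using hC 1 1 Iff.rfl 1 j 3 l 1 1
    · simpa using (hC 0 0 Iff.rfl 2 j 0 l 1 1).symm
    · simpa using hC 2 2 Iff.rfl 2 j 1 l 1 1
    · simpa [hbC] using (hC 2 1 (by decide) 2 j 1 l 1 1).symm
    · simpa using hC 2 2 Iff.rfl 2 j 3 l 1 1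
    · simpa using (hC 0 0 Iff.rfl 3 j 0 l 1 1).symm
    · simpa using hC 3 3 Iff.rfl 3 j 1 l 1 1
    · simpa using hC 3 3 Iff.rfl 3 j 2 l 1 1
    · simpa [hbC] using (hC 3 1 (by decide) 3 j 1 l 1 1).symm

/-- The algebra `B = ℂ ⊕ M₃(ℂ) ⊕ M₄(ℂ) ⊕ M₄(ℂ)` (represented as
above) and `B°` commute, and in fact `B' = B°`. -/
theorem BSM_commutant_eq_opp :
    (∀ ξ ∈ BSM, ∀ η ∈ BSM, ξ * sharp JSM η = sharp JSM η * ξ) ∧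
    commutant BSM = opp BSM := by
  have comm : ∀ ξ ∈ BSM, ∀ η ∈ BSM, ξ * sharp JSM η = sharp JSM η * ξ := by
    rintro ξ ⟨l, m, a, b, rfl⟩ η ⟨l', m', a', b', rfl⟩
    show Bop l m a b * sharp JSM (Bop l' m' a' b') = sharp JSM (Bop l' m' a' b') * Bop l m a b
    rw [sharp_Bop]
    exact Bop_comm_Bop' l m a b l' m'ᵀ a'ᵀ b'ᵀ
  refine ⟨comm, ?_⟩
  ext η
  constructor
  · exact fun hη => commutant_sub η hη
  · rintro ⟨ξ, hξ, rfl⟩ ζ hζ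
    exact (comm ζ hζ ξ hξ).symm
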